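/- Let A be an n×n adjacency matrix of a k-edge-coloring with lexicographically sorted degree matrix M = α(A). Then there exists a permutation π of the vertices with α(π(A)) = M such that for all i < j with M_i = M_j (equal rows of the degree matrix), row i of π(A) is lexicographically ≤ row j of π(A) after deleting the entries at positions i and j from both rows. -/

import Mathlib

/-- The degree of vertex `v` in color `c` for a `k`-edge-coloring `κ` of `K_n`. -/
def degc {n k : ℕ} (κ : Fin n → Fin n → Fin k) (c : Fin k) (v : Fin n) : ℕ :=
  (Finset.univ.filter (fun u => u ≠ v ∧ κ v u = c)).card

/-- There is a monochromatic clique of size `m` in color `c` inside the vertex set `S`. -/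
def monoCliqueIn {n k : ℕ} (κ : Fin n → Fin n → Fin k) (c : Fin k) (m : ℕ)
    (S : Finset (Fin n)) : Prop :=
  ∃ T ⊆ S, T.card = m ∧ ∀ u ∈ T, ∀ v ∈ T, u ≠ v → κ u v = c

/-- There is a monochromatic clique of size `m` in color `c`. -/
def monoClique {n k : ℕ} (κ : Fin n → Fin n → Fin k) (c : Fin k) (m : ℕ) : Prop :=
  monoCliqueIn κ c m Finset.univ

/-- The set of `c`-colored neighbors of `v`. -/
def nbhd {n k : ℕ} (κ : Fin n → Fin n → Fin k) (c : Fin k) (v : Fin n) : Finset (Fin n) :=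
  Finset.univ.filter (fun u => u ≠ v ∧ κ v u = c)

/-- The degree matrix of a coloring: entry `(i,j)` is the degree of vertex `i` in color `j`. -/
def degMatrix {n k : ℕ} (κ : Fin n → Fin n → Fin k) : Fin n → Fin k → ℕ :=
  fun i j => degc κ j i

/-- Simultaneously permuting rows and columns of an adjacency matrix by `π`. -/
def permMat {n k : ℕ} (π : Equiv.Perm (Fin n)) (A : Fin n → Fin n → Fin k) :
    Fin n → Fin n → Fin k :=
  fun i j => A (π.symm i) (π.symm j)

/-- Row `r` of `A` as a list, after simultaneously omitting positions `i` and `j`. -/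
def restrictedRow {n k : ℕ} (A : Fin n → Fin n → Fin k) (r i j : Fin n) : List (Fin k) :=
  ((List.finRange n).filter (fun t => t ≠ i ∧ t ≠ j)).map (A r)

/-- The symmetry-breaking predicate `sb*_ℓ(A, M)`: whenever rows `i < j` of the degree
matrix `M` are equal, row `i` of `A` is lexicographically at most row `j` of `A` after
simultaneously omitting positions `i` and `j`. -/
def sbStar {n k : ℕ} (A : Fin n → Fin n → Fin k) (M : Fin n → Fin k → ℕ) : Prop :=
  ∀ i j : Fin n, i < j → (∀ c, M i c = M j c) →
    restrictedRow A i i j ≤ restrictedRow A j i j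


set_option linter.unusedSectionVars false
set_option linter.unusedVariables false

section lexlemmas
variable {α β : Type*} [LinearOrder α] [LinearOrder β]

lemma lex_map_of_split (f g : α → β) :
    ∀ (l₁ : List α) (x : α) (l₂ : List α), (∀ s ∈ l₁, f s = g s) → f x < g x →
      List.Lex (· < ·) ((l₁ ++ x :: l₂).map f) ((l₁ ++ x :: l₂).map g) := by
  intro l₁
  induction l₁ with
  | nil => intro x l₂ _ hx; simpa using List.Lex.rel hx
  | cons a t ih =>
      intro x l₂ hpre hx
      have ha : f a = g a := hpre a (by simp)
      simp only [List.cons_append, List.map_cons]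
      rw [ha]
      exact List.Lex.cons (ih x l₂ (fun s hs => hpre s (by simp [hs])) hx)

lemma exists_of_lex_map (f g : α → β) :
    ∀ (l : List α), List.Lex (· < ·) (l.map f) (l.map g) →
      ∃ l₁ x l₂, l = l₁ ++ x :: l₂ ∧ (∀ s ∈ l₁, f s = g s) ∧ f x < g x := by
  intro l
  induction l with
  | nil => intro h; simp at h
  | cons a t ih =>
      intro h
      simp only [List.map_cons] at h
      generalize hu : f a = u at h
      generalize hv : g a = v at h
      cases h with
      | rel hr => exact ⟨[], a, t, by simp, by simp, by rw [hu, hv]; exact hr⟩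
      | cons h' =>
          obtain ⟨l₁, x, l₂, hl, hpre, hx⟩ := ih h'
          exact ⟨a :: l₁, x, l₂, by rw [hl]; simp, by
            intro s hs
            rcases List.mem_cons.mp hs with h | h
            · subst h; rw [hu, hv]
            · exact hpre s h, hx⟩

lemma lex_map_of_sorted {f g : α → β} {l : List α} (hl : l.Pairwise (· < ·))
    {x : α} (hx : x ∈ l) (hfg : f x < g x) (hpre : ∀ s ∈ l, s < x → f s = g s) :
    List.Lex (· < ·) (l.map f) (l.map g) := by
  obtain ⟨l₁, l₂, rfl⟩ := List.append_of_mem hx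
  have hp := List.pairwise_append.mp hl
  exact lex_map_of_split f g l₁ x l₂
    (fun s hs => hpre s (by simp [hs]) (hp.2.2 s hs x (by simp))) hfg

lemma exists_of_lex_map_sorted {f g : α → β} {l : List α} (hl : l.Pairwise (· < ·))
    (h : List.Lex (· < ·) (l.map f) (l.map g)) :
    ∃ x ∈ l, f x < g x ∧ ∀ s ∈ l, s < x → f s = g s := by
  obtain ⟨l₁, x, l₂, rfl, hpre, hx⟩ := exists_of_lex_map f g l h
  have hp := List.pairwise_append.mp hl
  refine ⟨x, by simp, hx, ?_⟩
  intro s hs hsx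
  rcases (by simpa using hs : s ∈ l₁ ∨ s = x ∨ s ∈ l₂) with h | h | h
  · exact hpre s h
  · exact absurd hsx (by simp [h])
  · exact absurd hsx (not_lt.mpr (le_of_lt (List.pairwise_cons.mp hp.2.1 |>.1 s h)))

end lexlemmas

lemma degc_permMat {n k : ℕ} (A : Fin n → Fin n → Fin k) (σ : Equiv.Perm (Fin n))
    (c : Fin k) (v : Fin n) : degc (permMat σ A) c v = degc A c (σ.symm v) := by
  classical
  unfold degc
  refine Finset.card_bij' (fun u _ => σ.symm u) (fun u _ => σ u) ?_ ?_ ?_ ?_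
  · intro a ha
    simp only [Finset.mem_filter, Finset.mem_univ, true_and] at ha ⊢
    exact ⟨fun h => ha.1 (σ.symm.injective h), ha.2⟩
  · intro a ha
    simp only [Finset.mem_filter, Finset.mem_univ, true_and] at ha ⊢
    refine ⟨fun h => ha.1 ?_, ?_⟩
    · have := congrArg σ.symm h
      simpa using this
    · simpa [permMat] using ha.2
  · intro a _; simp
  · intro a _; simp

lemma degMatrix_permMat {n k : ℕ} (A : Fin n → Fin n → Fin k) (σ : Equiv.Perm (Fin n))
    (v : Fin n) : degMatrix (permMat σ A) v = degMatrix A (σ.symm v) := by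
  funext c; exact degc_permMat A σ c v

/-- the measure: rows with diagonal omitted, listed in order. -/
def matKey {n k : ℕ} (B : Fin n → Fin n → Fin k) : List (List (Fin k)) :=
  (List.finRange n).map (fun r => ((List.finRange n).filter (fun t => t ≠ r)).map (B r))


/-- If `A` has lexicographically sorted degree matrix `M = α(A)`, then some degree-matrix
preserving vertex permutation `π` makes the symmetry-breaking predicate hold. -/
theorem exists_perm_sbStar {n k : ℕ} (A : Fin n → Fin n → Fin k)
    (hsym : ∀ u v, A u v = A v u)
    (M : Fin n → Fin k → ℕ) (hM : degMatrix A = M)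
    (hsorted : ∀ i j : Fin n, i ≤ j → List.ofFn (M j) ≤ List.ofFn (M i)) :
    ∃ π : Equiv.Perm (Fin n),
      degMatrix (permMat π A) = M ∧ sbStar (permMat π A) M := by
  classical
  set S : Finset (Equiv.Perm (Fin n)) :=
    Finset.univ.filter (fun σ => degMatrix (permMat σ A) = M) with hSdef
  have hone : (1 : Equiv.Perm (Fin n)) ∈ S := by
    have : permMat 1 A = A := by funext u v; simp [permMat]; rfl
    simp [hSdef, this, hM]
  obtain ⟨π, hπ, hmin⟩ := Finset.exists_min_image S (fun σ => matKey (permMat σ A)) ⟨1, hone⟩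
  have hπM : degMatrix (permMat π A) = M := (Finset.mem_filter.mp hπ).2
  refine ⟨π, hπM, ?_⟩
  intro i j hij hMeq
  by_contra hviol
  set B : Fin n → Fin n → Fin k := permMat π A with hB
  have hBsym : ∀ u v, B u v = B v u := fun u v => hsym _ _
  have hlt : restrictedRow B j i j < restrictedRow B i i j := not_le.mp hviol
  have hlex : List.Lex (· < ·)
      (((List.finRange n).filter (fun t => t ≠ i ∧ t ≠ j)).map (B j))
      (((List.finRange n).filter (fun t => t ≠ i ∧ t ≠ j)).map (B i)) := hlt
  have hsort0 : ((List.finRange n).filter (fun t => t ≠ i ∧ t ≠ j)).Pairwise (· < ·) :=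
    List.Pairwise.sublist List.filter_sublist (List.pairwise_lt_finRange n)
  obtain ⟨x, hxl, hxlt, hxpre⟩ := exists_of_lex_map_sorted hsort0 hlex
  have hxij : x ≠ i ∧ x ≠ j := by
    have := List.mem_filter.mp hxl
    simpa using this.2
  have hpre : ∀ s, s ≠ i → s ≠ j → s < x → B j s = B i s := by
    intro s h1 h2 h3
    exact hxpre s (by simp [List.mem_filter, h1, h2]) h3
  -- the swap
  set τ : Equiv.Perm (Fin n) := Equiv.swap i j with hτ
  have hτsymm : τ.symm = τ := Equiv.symm_swap i j
  set C : Fin n → Fin n → Fin k := permMat τ B with hC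
  have hCrt : ∀ r t, C r t = B (τ r) (τ t) := by
    intro r t; rw [hC]; simp [permMat, hτsymm]
  have hπ' : permMat (τ * π) A = C := by
    funext u v
    rw [hC, hB]
    simp [permMat, Equiv.Perm.mul_def, hτsymm]
  -- membership of τ * π in S
  have hMswap : ∀ v, M (τ v) = M v := by
    intro v
    rcases eq_or_ne v i with rfl | hvi
    · rw [hτ, Equiv.swap_apply_left]; funext c; exact (hMeq c).symm
    rcases eq_or_ne v j with rfl | hvj
    · rw [hτ, Equiv.swap_apply_right]; funext c; exact hMeq c
    · rw [hτ, Equiv.swap_apply_of_ne_of_ne hvi hvj]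
  have hτπS : τ * π ∈ S := by
    rw [hSdef, Finset.mem_filter]
    refine ⟨Finset.mem_univ _, ?_⟩
    funext v
    rw [hπ', hC, degMatrix_permMat, hτsymm]
    exact (congrFun hπM (τ v)).trans (hMswap v)
  -- key strict decrease
  have hxi : x ≠ i := hxij.1
  have hxj : x ≠ j := hxij.2
  have hτx : τ x = x := by rw [hτ]; exact Equiv.swap_apply_of_ne_of_ne hxi hxj
  have hrowsEq : ∀ r : Fin n, r < i → r < x →
      ((List.finRange n).filter (fun t => t ≠ r)).map (C r)
        = ((List.finRange n).filter (fun t => t ≠ r)).map (B r) := by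
    intro r hri hrx
    have hrj : r < j := lt_trans hri hij
    have hτr : τ r = r := by
      rw [hτ]; exact Equiv.swap_apply_of_ne_of_ne (ne_of_lt hri) (ne_of_lt hrj)
    refine List.map_congr_left ?_
    intro t _
    rw [hCrt, hτr]
    rcases eq_or_ne t i with h | hti
    · rw [h, hτ, Equiv.swap_apply_left, hBsym r j,
        hpre r (ne_of_lt hri) (ne_of_lt hrj) hrx, hBsym i r]
    rcases eq_or_ne t j with h | htj
    · rw [h, hτ, Equiv.swap_apply_right, hBsym r i,
        ← hpre r (ne_of_lt hri) (ne_of_lt hrj) hrx, hBsym j r]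
    · rw [hτ, Equiv.swap_apply_of_ne_of_ne hti htj]
  have hsortr : ∀ r0 : Fin n, ((List.finRange n).filter (fun t => t ≠ r0)).Pairwise (· < ·) :=
    fun r0 => List.Pairwise.sublist List.filter_sublist (List.pairwise_lt_finRange n)
  have hkey : matKey C < matKey B := by
    show List.Lex (· < ·) (matKey C) (matKey B)
    unfold matKey
    rcases lt_or_gt_of_ne hxi with hxlti | hiltx
    · -- first difference at row x, column i
      refine lex_map_of_sorted (List.pairwise_lt_finRange n) (x := x)
        (List.mem_finRange x) ?_ ?_
      · -- row x strictly decreases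
        refine lex_map_of_sorted (hsortr x) (x := i)
          (by simp [List.mem_filter, Ne.symm hxi]) ?_ ?_
        · show C x i < B x i
          rw [hCrt, hτx, hτ, Equiv.swap_apply_left, hBsym x j, hBsym x i]
          exact hxlt
        · intro s _ hsi
          have hsj : s < j := lt_trans hsi hij
          rw [hCrt, hτx, hτ, Equiv.swap_apply_of_ne_of_ne (ne_of_lt hsi) (ne_of_lt hsj)]
      · intro r _ hr
        exact hrowsEq r (lt_trans hr hxlti) hr
    · -- first difference at row i, column x
      refine lex_map_of_sorted (List.pairwise_lt_finRange n) (x := i)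
        (List.mem_finRange i) ?_ ?_
      · -- row i strictly decreases
        refine lex_map_of_sorted (hsortr i) (x := x)
          (by simp [List.mem_filter, hxi]) ?_ ?_
        · show C i x < B i x
          rw [hCrt, hτx, hτ, Equiv.swap_apply_left]
          exact hxlt
        · intro s hs hsx
          have hsi : s ≠ i := by
            have := List.mem_filter.mp hs
            simpa using this.2
          rw [hCrt, hτ, Equiv.swap_apply_left]
          rcases eq_or_ne s j with h | hsj
          · rw [h, Equiv.swap_apply_right, hBsym j i]
          · rw [Equiv.swap_apply_of_ne_of_ne hsi hsj]
            exact hpre s hsi hsj hsx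
      · intro r _ hr
        exact hrowsEq r hr (lt_trans hr hiltx)
  have hle := hmin (τ * π) hτπS
  rw [hπ'] at hle
  exact absurd hle (not_le.mpr hkey)
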